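/- In a strong locally out-transitive oriented graph, any two distinct inclusion-wise maximal hubs are disjoint. -/

import Mathlib

/-- `A` is the arc relation of an oriented graph: no loops and no digons. -/
def IsOriented {V : Type*} (A : V → V → Prop) : Prop :=
  Irreflexive A ∧ ∀ x y, A x y → ¬ A y x

/-- `D` is strong: a directed path between each ordered pair of vertices. -/
def IsStrong {V : Type*} (A : V → V → Prop) : Prop :=
  ∀ x y : V, Relation.ReflTransGen A x y

/-- The set `S` induces a strong subdigraph (all paths staying inside `S`). -/
def StrongOn {V : Type*} (A : V → V → Prop) (S : Set V) : Prop :=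
  ∀ x ∈ S, ∀ y ∈ S, Relation.ReflTransGen (fun a b => a ∈ S ∧ b ∈ S ∧ A a b) x y

/-- The set `S` induces a tournament. -/
def TournamentOn {V : Type*} (A : V → V → Prop) (S : Set V) : Prop :=
  ∀ x ∈ S, ∀ y ∈ S, x ≠ y → A x y ∨ A y x

/-- The set `S` induces an acyclic digraph. -/
def AcyclicOn {V : Type*} (A : V → V → Prop) (S : Set V) : Prop :=
  ∀ x : V, ¬ Relation.TransGen (fun a b => a ∈ S ∧ b ∈ S ∧ A a b) x x

/-- The set `S` induces a semicomplete digraph. -/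
def SemicompleteOn {V : Type*} (A : V → V → Prop) (S : Set V) : Prop :=
  ∀ x ∈ S, ∀ y ∈ S, x ≠ y → A x y ∨ A y x

/-- `z` lies strictly inside the cyclic interval `]x,y[` for the cyclic order `σ`. -/
def CycBtw {V : Type*} [Fintype V] (σ : V ≃ Fin (Fintype.card V)) (x z y : V) : Prop :=
  0 < (σ z - σ x).val ∧ (σ z - σ x).val < (σ y - σ x).val

/-- In-round: a cyclic order such that for every arc `xy` and `z ∈ ]x,y[`, `zy` is an arc. -/
def InRound {V : Type*} [Fintype V] (A : V → V → Prop) : Prop :=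
  ∃ σ : V ≃ Fin (Fintype.card V), ∀ x y z : V, A x y → CycBtw σ x z y → A z y

/-- Out-round: a cyclic order such that for every arc `xy` and `z ∈ ]x,y[`, `xz` is an arc. -/
def OutRound {V : Type*} [Fintype V] (A : V → V → Prop) : Prop :=
  ∃ σ : V ≃ Fin (Fintype.card V), ∀ x y z : V, A x y → CycBtw σ x z y → A x z

/-- Every out-neighbourhood induces a transitive tournament. -/
def LocallyOutTransitive {V : Type*} (A : V → V → Prop) : Prop :=
  ∀ x : V, TournamentOn A {y | A x y} ∧ AcyclicOn A {y | A x y}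

/-- A hub: a nonempty set inducing a strong subdigraph, all of whose vertices are
in-neighbours of some vertex outside of it. -/
def Hub {V : Type*} (A : V → V → Prop) (H : Set V) : Prop :=
  H.Nonempty ∧ StrongOn A H ∧ ∃ x ∉ H, ∀ h ∈ H, A h x

/-- Locally semicomplete digraph: no loops, and every out- and in-neighbourhood
induces a semicomplete digraph (digons are allowed). -/
def LocallySemicomplete {V : Type*} (A : V → V → Prop) : Prop :=
  Irreflexive A ∧ (∀ x : V, SemicompleteOn A {y | A x y}) ∧
    ∀ x : V, SemicompleteOn A {y | A y x}

/-- The underlying undirected graph is connected. -/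
def ConnectedDigraph {V : Type*} (A : V → V → Prop) : Prop :=
  ∀ x y : V, Relation.ReflTransGen (fun a b => A a b ∨ A b a) x y

/-- A weak hub: a nonempty set inducing a strong subdigraph that is strictly
in-dominated or strictly out-dominated by some vertex outside of it. -/
def WeakHub {V : Type*} (A : V → V → Prop) (X : Set V) : Prop :=
  X.Nonempty ∧ StrongOn A X ∧
    ∃ x ∉ X, (∀ u ∈ X, A u x ∧ ¬ A x u) ∨ ∀ u ∈ X, A x u ∧ ¬ A u x

/-- A set `X` is mixed if some outside vertex has both an out-neighbour and an
in-neighbour in `X`. -/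
def MixedSet {V : Type*} (A : V → V → Prop) (X : Set V) : Prop :=
  ∃ x ∉ X, (∃ u ∈ X, A x u) ∧ ∃ v ∈ X, A v x

/-- `X` is an inclusion-wise maximal weak hub. -/
def MaxWeakHub {V : Type*} (A : V → V → Prop) (X : Set V) : Prop :=
  WeakHub A X ∧ ∀ Y : Set V, WeakHub A Y → X ⊆ Y → Y = X


lemma rtg_mono' {V : Type*} {A : V → V → Prop} {S T : Set V} (hST : S ⊆ T) {a b : V}
    (h : Relation.ReflTransGen (fun a b => a ∈ S ∧ b ∈ S ∧ A a b) a b) :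
    Relation.ReflTransGen (fun a b => a ∈ T ∧ b ∈ T ∧ A a b) a b :=
  by
    induction h with
    | refl => exact Relation.ReflTransGen.refl
    | tail _ hr ih => exact ih.tail ⟨hST hr.1, hST hr.2.1, hr.2.2⟩

lemma frontier' {V : Type*} {A : V → V → Prop} {K : Set V} {P : V → Prop} {v u : V}
    (h : Relation.ReflTransGen (fun a b => a ∈ K ∧ b ∈ K ∧ A a b) v u)
    (hv : P v) : ¬ P u → ∃ c d, c ∈ K ∧ d ∈ K ∧ A c d ∧ P c ∧ ¬ P d := by
  induction h with
  | refl => exact fun hu => absurd hv hu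
  | @tail m u' hvm hmu ih =>
    intro hu
    by_cases hm : P m
    · exact ⟨m, u', hmu.1, hmu.2.1, hmu.2.2, hm, hu⟩
    · exact ih hm

lemma strongOn_union' {V : Type*} {A : V → V → Prop} {H K : Set V} {v : V}
    (hH : StrongOn A H) (hK : StrongOn A K) (hvH : v ∈ H) (hvK : v ∈ K) :
    StrongOn A (H ∪ K) := by
  intro a ha b hb
  rcases ha with ha | ha <;> rcases hb with hb | hb
  · exact rtg_mono' Set.subset_union_left (hH a ha b hb)
  · exact (rtg_mono' Set.subset_union_left (hH a ha v hvH)).trans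
      (rtg_mono' Set.subset_union_right (hK v hvK b hb))
  · exact (rtg_mono' Set.subset_union_right (hK a ha v hvK)).trans
      (rtg_mono' Set.subset_union_left (hH v hvH b hb))
  · exact rtg_mono' Set.subset_union_right (hK a ha b hb)

lemma aux' {V : Type*} {A : V → V → Prop}
    (hloc : LocallyOutTransitive A)
    {H K : Set V} (hsH : StrongOn A H) (hHmax : ∀ H' : Set V, Hub A H' → H ⊆ H' → H' = H)
    (hsK : StrongOn A K) (hKmax : ∀ H' : Set V, Hub A H' → K ⊆ H' → H' = K)
    (hne : H ≠ K) {v : V} (hvH : v ∈ H) (hvK : v ∈ K)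
    (x1 : V) (hx1H : x1 ∉ H) (hx1K : x1 ∉ K) (hd1 : ∀ h ∈ H, A h x1)
    (x2 : V) (hx2K : x2 ∉ K) (hd2 : ∀ h ∈ K, A h x2) : False := by
  by_cases hB : ∀ h ∈ K, A h x1
  · have hub : Hub A (H ∪ K) := by
      refine ⟨⟨v, Or.inl hvH⟩, strongOn_union' hsH hsK hvH hvK, x1, ?_, ?_⟩
      · intro hmem; rcases hmem with h | h
        exacts [hx1H h, hx1K h]
      · rintro h (hh | hh)
        exacts [hd1 h hh, hB h hh]
    have e1 := hHmax _ hub Set.subset_union_left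
    have e2 := hKmax _ hub Set.subset_union_right
    exact hne (e1.symm.trans e2)
  · push_neg at hB
    obtain ⟨u, huK, hux1⟩ := hB
    obtain ⟨c, d, hcK, hdK, hcd, hcx1, hdx1⟩ :=
      frontier' (P := fun z => A z x1) (hsK v hvK u huK) (hd1 v hvH) hux1
    have hx1d : A x1 d := by
      rcases (hloc c).1 x1 hcx1 d hcd (fun h => hx1K (h ▸ hdK)) with h | h
      · exact h
      · exact absurd h hdx1
    have hdx2 : A d x2 := hd2 d hdK
    have hcx2 : A c x2 := hd2 c hcK
    have hx1x2 : x1 ≠ x2 := fun h => hdx1 (h ▸ hdx2)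
    have hx12 : A x1 x2 := by
      rcases (hloc c).1 x1 hcx1 x2 hcx2 hx1x2 with h | h
      · exact h
      · exact absurd
          (Relation.TransGen.head ⟨hcx1, hcd, hx1d⟩
            (Relation.TransGen.head ⟨hcd, hcx2, hdx2⟩
              (Relation.TransGen.single ⟨hcx2, hcx1, h⟩)))
          ((hloc c).2 x1)
    have hub' : Hub A (insert x1 K) := by
      refine ⟨⟨x1, Set.mem_insert _ _⟩, ?_, x2, ?_, ?_⟩
      · intro a ha b hb
        have lift : ∀ p ∈ K, ∀ q ∈ K,
            Relation.ReflTransGen (fun a b => a ∈ insert x1 K ∧ b ∈ insert x1 K ∧ A a b) p q :=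
          fun p hp q hq => rtg_mono' (Set.subset_insert _ _) (hsK p hp q hq)
        rcases Set.mem_insert_iff.mp ha with rfl | haK <;>
          rcases Set.mem_insert_iff.mp hb with rfl | hbK
        · exact Relation.ReflTransGen.refl
        · exact Relation.ReflTransGen.head
            ⟨Set.mem_insert _ _, Set.mem_insert_of_mem _ hdK, hx1d⟩ (lift d hdK b hbK)
        · exact Relation.ReflTransGen.tail (lift a haK c hcK)
            ⟨Set.mem_insert_of_mem _ hcK, Set.mem_insert _ _, hcx1⟩
        · exact lift a haK b hbK
      · intro hmem
        rcases Set.mem_insert_iff.mp hmem with h | h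
        exacts [hx1x2 h.symm, hx2K h]
      · intro h hh
        rcases Set.mem_insert_iff.mp hh with rfl | hh
        exacts [hx12, hd2 h hh]
    have := hKmax _ hub' (Set.subset_insert _ _)
    exact hx1K (this ▸ Set.mem_insert x1 K)

theorem stmt5 {V : Type*} [Fintype V] (A : V → V → Prop)
    (hor : IsOriented A) (hstrong : IsStrong A) (hloc : LocallyOutTransitive A)
    (H1 H2 : Set V)
    (h1 : Hub A H1) (h1max : ∀ H' : Set V, Hub A H' → H1 ⊆ H' → H' = H1)
    (h2 : Hub A H2) (h2max : ∀ H' : Set V, Hub A H' → H2 ⊆ H' → H' = H2)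
    (hne : H1 ≠ H2) :
    H1 ∩ H2 = ∅ := by
  by_contra hcon
  obtain ⟨v, hv1, hv2⟩ := Set.nonempty_iff_ne_empty.mpr hcon
  obtain ⟨hne1, hs1, x1, hx1, hd1⟩ := h1
  obtain ⟨hne2, hs2, x2, hx2, hd2⟩ := h2
  by_cases hx1K : x1 ∈ H2
  · have hx2H1 : x2 ∉ H1 := fun h => hor.2 x1 x2 (hd2 x1 hx1K) (hd1 x2 h)
    exact aux' hloc hs2 h2max hs1 h1max (Ne.symm hne) hv2 hv1 x2 hx2 hx2H1 hd2 x1 hx1 hd1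
  · exact aux' hloc hs1 h1max hs2 h2max hne hv1 hv2 x1 hx1 hx1K hd1 x2 hx2 hd2
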